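/- Let A ⊆ Mat(n,K) be a commutative semisimple K-subalgebra containing the identity matrix I_n. Then there exists an injective A-module homomorphism from the regular A-module A into the standard module K^n. -/

import Mathlib

set_option maxHeartbeats 1600000 in
set_option synthInstance.maxHeartbeats 400000 in
theorem regular_module_embeds_standard (n : ℕ) (K : Type*) [Field K]
    (A : Subalgebra K (Matrix (Fin n) (Fin n) K))
    (hcomm : ∀ x y : A, x * y = y * x) (hss : Ideal.jacobson (⊥ : Ideal A) = ⊥) :
    ∃ f : A →ₗ[K] (Fin n → K), Function.Injective f ∧
      ∀ a x : A, f (a * x) = (a : Matrix (Fin n) (Fin n) K).mulVec (f x) := by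
  classical
  letI : CommRing A := { (inferInstance : Ring A) with mul_comm := hcomm }
  -- A is finite dimensional over K, hence Artinian
  haveI : IsArtinian K A := inferInstance
  haveI : IsArtinianRing A := isArtinian_of_tower K inferInstance
  -- reduced
  haveI : IsReduced A := by
    constructor
    intro x hx
    have hx' : x ∈ nilradical A := mem_nilradical.mpr hx
    have : x ∈ Ideal.jacobson (⊥ : Ideal A) := Ideal.radical_le_jacobson hx'
    rwa [hss, Ideal.mem_bot] at this
  haveI : IsSemisimpleRing A := IsArtinianRing.isSemisimpleRing_of_isReduced A
  -- annihilator ideals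
  have mv : ∀ (a b : A) (v : Fin n → K),
      ((a * b : A) : Matrix (Fin n) (Fin n) K).mulVec v
        = (a : Matrix (Fin n) (Fin n) K).mulVec ((b : Matrix (Fin n) (Fin n) K).mulVec v) := by
    intro a b v
    rw [Matrix.mulVec_mulVec]; rfl
  let Ann : (Fin n → K) → Ideal A := fun v =>
    { carrier := {a : A | (a : Matrix (Fin n) (Fin n) K).mulVec v = 0}
      add_mem' := by
        intro a b ha hb
        simp only [Set.mem_setOf_eq] at *
        show ((a + b : A) : Matrix (Fin n) (Fin n) K).mulVec v = 0
        rw [show ((a + b : A) : Matrix (Fin n) (Fin n) K) = a + b from rfl,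
          Matrix.add_mulVec, ha, hb, add_zero]
      zero_mem' := by
        show ((0 : A) : Matrix (Fin n) (Fin n) K).mulVec v = 0
        simp
      smul_mem' := by
        intro c a ha
        simp only [Set.mem_setOf_eq] at *
        show ((c * a : A) : Matrix (Fin n) (Fin n) K).mulVec v = 0
        rw [mv, ha, Matrix.mulVec_zero] }
  have memAnn : ∀ (v : Fin n → K) (a : A),
      a ∈ Ann v ↔ (a : Matrix (Fin n) (Fin n) K).mulVec v = 0 := fun _ _ => Iff.rfl
  -- faithfulness
  have faithful : ∀ a : A, a ≠ 0 → ∃ w, (a : Matrix (Fin n) (Fin n) K).mulVec w ≠ 0 := by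
    intro a ha
    by_contra h
    push_neg at h
    apply ha
    have : (a : Matrix (Fin n) (Fin n) K) = 0 := by
      ext i j
      have := congrFun (h (Pi.single j 1)) i
      simpa using this
    exact Subtype.ext this
  -- a vector with minimal annihilator
  obtain ⟨I, ⟨v, hv⟩, hmin⟩ := IsArtinian.set_has_minimal (R := A) (M := A)
    {I | ∃ v, I = Ann v} ⟨Ann 0, 0, rfl⟩
  subst hv
  -- the minimal annihilator is ⊥
  have hAnnBot : Ann v = ⊥ := by
    by_contra hne
    -- get a complement, and an idempotent e ∈ Ann v with a * e = a for all a ∈ Ann v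
    obtain ⟨J, hJ⟩ := exists_isCompl (Ann v)
    obtain ⟨e, f, he, hf, hef⟩ := Submodule.codisjoint_iff_exists_add_eq.mp hJ.codisjoint 1
    have hIJ : ∀ x : A, x ∈ Ann v → x ∈ J → x = 0 := by
      intro x h1 h2
      have : x ∈ Ann v ⊓ J := ⟨h1, h2⟩
      rwa [hJ.inf_eq_bot, Ideal.mem_bot] at this
    have key : ∀ a : A, a ∈ Ann v → a * e = a := by
      intro a ha
      have h1 : a * e + a * f = a := by rw [← mul_add, hef, mul_one]
      have h2 : a * f = 0 := hIJ _ (Ideal.mul_mem_right _ _ ha)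
        (mul_comm a f ▸ Ideal.mul_mem_right _ _ hf)
      rw [h2, add_zero] at h1
      exact h1
    have hee : e * e = e := key e he
    have hene : e ≠ 0 := by
      intro h0
      apply hne
      refine le_antisymm (fun a ha => ?_) bot_le
      rw [Ideal.mem_bot, ← key a ha, h0, mul_zero]
    obtain ⟨w, hw⟩ := faithful e hene
    set u := v + (e : Matrix (Fin n) (Fin n) K).mulVec w with hu
    have hsub : Ann u ≤ Ann v := by
      intro a ha
      have h2 : ((e * a : A) : Matrix (Fin n) (Fin n) K).mulVec u = 0 := by
        have := (Ann u).smul_mem e ha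
        rwa [smul_eq_mul, memAnn] at this
      rw [memAnn] at ha ⊢
      rw [hu, Matrix.mulVec_add, ← mv] at ha
      rw [hu, Matrix.mulVec_add, ← mv, mul_assoc] at h2
      have hev : ((e * a : A) : Matrix (Fin n) (Fin n) K).mulVec v = 0 := by
        have : e * a ∈ Ann v := Ideal.mul_mem_right _ _ he
        rwa [memAnn] at this
      rw [hev, zero_add] at h2
      have : ((a * e : A) : Matrix (Fin n) (Fin n) K).mulVec w = 0 := by
        have hrw : e * (a * e) = a * e := by
          rw [mul_comm a e, ← mul_assoc, hee]
        rw [← hrw]; exact h2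
      rw [this] at ha
      rwa [add_zero] at ha
    have hne' : e ∉ Ann u := by
      rw [memAnn, hu, Matrix.mulVec_add, ← mv, hee]
      have hev : (e : Matrix (Fin n) (Fin n) K).mulVec v = 0 := (memAnn v e).mp he
      rw [hev, zero_add]
      exact hw
    have hlt : Ann u < Ann v := lt_of_le_of_ne hsub (by
      intro h
      exact hne' (h ▸ he))
    exact hmin (Ann u) ⟨u, rfl⟩ hlt
  -- build the linear map
  refine ⟨{ toFun := fun x => (x : Matrix (Fin n) (Fin n) K).mulVec v
            map_add' := by
              intro a b
              show ((a + b : A) : Matrix (Fin n) (Fin n) K).mulVec v = _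
              rw [show ((a + b : A) : Matrix (Fin n) (Fin n) K) = a + b from rfl,
                Matrix.add_mulVec]
            map_smul' := by
              intro c a
              show ((c • a : A) : Matrix (Fin n) (Fin n) K).mulVec v = _
              rw [show ((c • a : A) : Matrix (Fin n) (Fin n) K)
                  = c • (a : Matrix (Fin n) (Fin n) K) from rfl,
                Matrix.smul_mulVec]
              rfl }, ?_, ?_⟩
  · intro a b hab
    simp only [LinearMap.coe_mk, AddHom.coe_mk] at hab
    have : a - b ∈ Ann v := by
      rw [memAnn]
      rw [show ((a - b : A) : Matrix (Fin n) (Fin n) K)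
          = (a : Matrix (Fin n) (Fin n) K) - b from rfl, Matrix.sub_mulVec, hab, sub_self]
    rw [hAnnBot, Ideal.mem_bot, sub_eq_zero] at this
    exact this
  · intro a x
    exact mv a x v
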